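/- Let J be the 2×2 matrix with rows (0, −1) and (1, 0), and for θ ∈ ℝ let R(θ) be the rotation matrix with rows (cos θ, −sin θ) and (sin θ, cos θ). Let f : ℝ² \ {0} → ℝ² be continuous and satisfy f(R(θ)·X) = R(θ)·f(X) for every θ ∈ ℝ and every X ∈ ℝ² \ {0}. Then there exist continuous functions φ, ψ : (0, ∞) → ℝ such that f(X) = φ(‖X‖)·X + ψ(‖X‖)·J·X for every X ∈ ℝ² \ {0}, where ‖·‖ is the Euclidean norm. -/

import Mathlib

/-- Let `J = [[0,−1],[1,0]]` and `R(θ)` the rotation matrix of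
angle `θ`. If `f : ℝ² \ {0} → ℝ²` is continuous and `SO(2,ℝ)`-equivariant
(`f(R(θ)·X) = R(θ)·f(X)`), then `f(X) = φ(‖X‖)•X + ψ(‖X‖)•J·X` with continuous
`φ, ψ : (0,∞) → ℝ`, where `‖X‖ = √(X_1² + X_2²)` is the Euclidean norm. -/
theorem stmt_18
    (J : Matrix (Fin 2) (Fin 2) ℝ) (hJ : J = Matrix.of ![![0, -1], ![1, 0]])
    (R : ℝ → Matrix (Fin 2) (Fin 2) ℝ)
    (hR : ∀ θ, R θ = Matrix.of ![![Real.cos θ, -Real.sin θ], ![Real.sin θ, Real.cos θ]])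
    (f : (Fin 2 → ℝ) → (Fin 2 → ℝ))
    (hf : ContinuousOn f {X : Fin 2 → ℝ | X ≠ 0})
    (hequiv : ∀ θ : ℝ, ∀ X : Fin 2 → ℝ, X ≠ 0 →
      f ((R θ).mulVec X) = (R θ).mulVec (f X)) :
    ∃ φ ψ : ℝ → ℝ,
      ContinuousOn φ (Set.Ioi 0) ∧ ContinuousOn ψ (Set.Ioi 0) ∧
      ∀ X : Fin 2 → ℝ, X ≠ 0 →
        f X = φ (Real.sqrt ((X 0) ^ 2 + (X 1) ^ 2)) • X
              + ψ (Real.sqrt ((X 0) ^ 2 + (X 1) ^ 2)) • J.mulVec X := by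
  -- the embedding r ↦ (r, 0)
  have hcont_e : Continuous fun r : ℝ => (![r, 0] : Fin 2 → ℝ) := by
    refine continuous_pi fun i => ?_
    fin_cases i
    · simpa using continuous_id'
    · simpa using continuous_const
  have hmaps : ∀ r ∈ Set.Ioi (0:ℝ), (![r, 0] : Fin 2 → ℝ) ≠ 0 := by
    intro r hr h
    have := congrFun h 0
    simp at this
    exact (ne_of_gt hr) this
  have hg : ContinuousOn (fun r : ℝ => f ![r, 0]) (Set.Ioi 0) :=
    hf.comp hcont_e.continuousOn hmaps
  refine ⟨fun r => f ![r, 0] 0 / r, fun r => f ![r, 0] 1 / r, ?_, ?_, ?_⟩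
  · exact (((continuous_apply (0 : Fin 2)).comp_continuousOn hg).div
      continuousOn_id (fun r hr => ne_of_gt hr))
  · exact (((continuous_apply (1 : Fin 2)).comp_continuousOn hg).div
      continuousOn_id (fun r hr => ne_of_gt hr))
  · intro X hX
    set r := Real.sqrt ((X 0) ^ 2 + (X 1) ^ 2) with hrdef
    have hX01 : X 0 ≠ 0 ∨ X 1 ≠ 0 := by
      by_contra h
      push_neg at h
      apply hX
      funext i; fin_cases i <;> simp [h.1, h.2]
    have hrpos : 0 < r := by
      rcases hX01 with h | h
      · exact Real.sqrt_pos.2 (by positivity)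
      · exact Real.sqrt_pos.2 (by positivity)
    have hr0 : r ≠ 0 := ne_of_gt hrpos
    set z : ℂ := ⟨X 0, X 1⟩ with hz
    have hzne : z ≠ 0 := by
      intro h
      rcases hX01 with h1 | h1 <;>
        simp [hz, Complex.ext_iff] at h <;> exact absurd h.1 (by tauto)
    have habs : ‖z‖ = r := by
      rw [Complex.norm_def, Complex.normSq_mk, hrdef]
      ring_nf
    set θ := Complex.arg z with hθ
    have hc : Real.cos θ = X 0 / r := by
      rw [hθ, Complex.cos_arg hzne, habs]
    have hs : Real.sin θ = X 1 / r := by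
      rw [hθ, Complex.sin_arg, habs]
    have hX0 : X 0 = r * Real.cos θ := by rw [hc]; field_simp
    have hX1 : X 1 = r * Real.sin θ := by rw [hs]; field_simp
    have hRe : (R θ).mulVec ![r, 0] = X := by
      funext i
      fin_cases i <;>
        simp [hR, Matrix.mulVec, dotProduct, Fin.sum_univ_two, hX0, hX1] <;> ring
    have hene : (![r, 0] : Fin 2 → ℝ) ≠ 0 := hmaps r hrpos
    have key : f X = (R θ).mulVec (f ![r, 0]) := by
      rw [← hRe, hequiv θ _ hene]
    rw [key]
    funext i
    fin_cases i <;>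
      simp [hR, hJ, Matrix.mulVec, dotProduct, Fin.sum_univ_two, hX0, hX1,
        div_mul_eq_mul_div, mul_comm] <;> field_simp <;> ring
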